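/- Let (μ_t)_{t≥0} be a family of integrable probability measures with negative means, non-decreasing in the WDS order. If the mean m_t = ∫ y dμ_t(y) is constant in t, then μ_s = μ_t for all s, t ≥ 0. -/

import Mathlib

open MeasureTheory Set Filter
open Topology

noncomputable def meanM (μ : Measure ℝ) : ℝ := ∫ y, y ∂μ

noncomputable def rSupE (μ : Measure ℝ) : EReal :=
  sInf ((fun z : ℝ => (z : EReal)) '' {z : ℝ | μ (Ici z) = 0})

noncomputable def psiWds (μ : Measure ℝ) (x : ℝ) : EReal :=
  if (x : EReal) < rSupE μ then
    ((((∫ y in Ici x, y ∂μ) - meanM μ) / (μ (Ici x)).toReal : ℝ) : EReal)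
  else ⊤

noncomputable def Kfun (μ : Measure ℝ) (x : ℝ) : ℝ :=
  (∫ y in Ici x, (y - x) ∂μ) - meanM μ


lemma intmax (μ : Measure ℝ) [IsFiniteMeasure μ] (hint : Integrable (fun y : ℝ => y) μ) (x : ℝ) :
    Integrable (fun y : ℝ => max (y - x) 0) μ :=
  (hint.sub (integrable_const x)).pos_part

lemma Kfun_eq (μ : Measure ℝ) (x : ℝ) :
    Kfun μ x = (∫ y, max (y - x) 0 ∂μ) - meanM μ := by
  unfold Kfun
  congr 1
  rw [← integral_indicator measurableSet_Ici]
  congr 1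
  ext y
  by_cases h : x ≤ y
  · simp [Set.indicator_of_mem (mem_Ici.2 h), max_eq_left (by linarith : (0:ℝ) ≤ y - x)]
  · simp [Set.indicator_of_notMem (fun hy => h (mem_Ici.1 hy)),
      max_eq_right (by linarith : y - x ≤ (0:ℝ))]

lemma Kfun_ge (μ : Measure ℝ) (x : ℝ) : -meanM μ ≤ Kfun μ x := by
  rw [Kfun_eq]
  have : (0:ℝ) ≤ ∫ y, max (y - x) 0 ∂μ := integral_nonneg fun y => le_max_right _ _
  linarith

lemma Kfun_anti (μ : Measure ℝ) [IsFiniteMeasure μ] (hint : Integrable (fun y : ℝ => y) μ) :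
    Antitone (Kfun μ) := by
  intro a b hab
  rw [Kfun_eq, Kfun_eq]
  have : (∫ y, max (y - b) 0 ∂μ) ≤ ∫ y, max (y - a) 0 ∂μ := by
    refine integral_mono (intmax μ hint b) (intmax μ hint a) fun y => ?_
    exact max_le_max (by linarith) le_rfl
  linarith

lemma Kfun_lip (μ : Measure ℝ) [IsProbabilityMeasure μ]
    (hint : Integrable (fun y : ℝ => y) μ) (a b : ℝ) :
    |Kfun μ a - Kfun μ b| ≤ |a - b| := by
  have h1 : Kfun μ a - Kfun μ b = ∫ y, (max (y - a) 0 - max (y - b) 0) ∂μ := by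
    rw [integral_sub (intmax μ hint a) (intmax μ hint b), Kfun_eq, Kfun_eq]; ring
  rw [h1, ← Real.norm_eq_abs]
  refine (norm_integral_le_integral_norm _).trans ?_
  simp only [Real.norm_eq_abs]
  have h2 : (∫ y, |max (y - a) 0 - max (y - b) 0| ∂μ) ≤ ∫ _y, |a - b| ∂μ := by
    refine integral_mono ((intmax μ hint a).sub (intmax μ hint b)).abs (integrable_const _)
      fun y => ?_
    calc |max (y - a) 0 - max (y - b) 0| ≤ |(y - a) - (y - b)| := abs_max_sub_max_le_abs _ _ _
      _ = |a - b| := by rw [abs_sub_comm]; congr 1; ring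
  simpa using h2

lemma Kfun_cont (μ : Measure ℝ) [IsProbabilityMeasure μ]
    (hint : Integrable (fun y : ℝ => y) μ) : Continuous (Kfun μ) := by
  refine (LipschitzWith.of_dist_le_mul (K := 1) fun a b => ?_).continuous
  rw [Real.dist_eq, Real.dist_eq]
  simpa using Kfun_lip μ hint a b

lemma Kfun_sub_eq (μ : Measure ℝ) [IsProbabilityMeasure μ]
    (hint : Integrable (fun y : ℝ => y) μ) (z x : ℝ) :
    Kfun μ z - Kfun μ x = ∫ y, (max (y - z) 0 - max (y - x) 0) ∂μ := by
  rw [integral_sub (intmax μ hint z) (intmax μ hint x), Kfun_eq, Kfun_eq]; ring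

lemma slope_tendsto_aux (μ : Measure ℝ) [IsProbabilityMeasure μ]
    (hint : Integrable (fun y : ℝ => y) μ) (x : ℝ) (l : Filter ℝ)
    [l.IsCountablyGenerated] (s : Set ℝ) (hs : MeasurableSet s)
    (hl : ∀ᶠ z in l, z ≠ x)
    (hptw : ∀ y : ℝ, Tendsto (fun z => (max (y - z) 0 - max (y - x) 0) / (z - x)) l
      (𝓝 (s.indicator (fun _ => (-1:ℝ)) y))) :
    Tendsto (slope (Kfun μ) x) l (𝓝 (-(μ s).toReal)) := by
  have key : Tendsto (fun z => ∫ y, (max (y - z) 0 - max (y - x) 0) / (z - x) ∂μ)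
      l (𝓝 (∫ y, s.indicator (fun _ => (-1:ℝ)) y ∂μ)) := by
    refine tendsto_integral_filter_of_dominated_convergence (fun _ => (1:ℝ)) ?_ ?_
      (integrable_const 1) (Eventually.of_forall hptw)
    · refine Eventually.of_forall fun z => ?_
      exact ((((continuous_id.sub continuous_const).max continuous_const).sub
        ((continuous_id.sub continuous_const).max continuous_const)).div_const
        _).aestronglyMeasurable
    · filter_upwards [hl] with z hz
      refine Eventually.of_forall fun y => ?_
      rw [Real.norm_eq_abs, abs_div, div_le_one (abs_pos.2 (sub_ne_zero.2 hz))]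
      calc |max (y - z) 0 - max (y - x) 0| ≤ |(y - z) - (y - x)| := abs_max_sub_max_le_abs _ _ _
        _ = |z - x| := by rw [abs_sub_comm]; congr 1; ring
  have hval : (∫ y, s.indicator (fun _ => (-1:ℝ)) y ∂μ) = -(μ s).toReal := by
    rw [integral_indicator_const (-1 : ℝ) hs]; simp; rfl
  rw [← hval]
  refine key.congr' ?_
  filter_upwards [hl] with z hz
  simp_rw [div_eq_mul_inv]
  rw [integral_mul_const, ← Kfun_sub_eq μ hint z x, slope_def_field, div_eq_mul_inv]

lemma Kfun_hasDeriv_right (μ : Measure ℝ) [IsProbabilityMeasure μ]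
    (hint : Integrable (fun y : ℝ => y) μ) (x : ℝ) :
    HasDerivWithinAt (Kfun μ) (-(μ (Ioi x)).toReal) (Ici x) x := by
  rw [hasDerivWithinAt_iff_tendsto_slope, Ici_sdiff_left]
  refine slope_tendsto_aux μ hint x _ _ measurableSet_Ioi ?_ ?_
  · filter_upwards [self_mem_nhdsWithin] with z hz using ne_of_gt hz
  · intro y
    by_cases hy : x < y
    · rw [indicator_of_mem (mem_Ioi.mpr hy)]
      refine Tendsto.congr' ?_ tendsto_const_nhds
      filter_upwards [Ioo_mem_nhdsGT_of_mem (left_mem_Ico.2 hy)] with z hz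
      have h1 : max (y - z) 0 = y - z := max_eq_left (by linarith [hz.2])
      have h2 : max (y - x) 0 = y - x := max_eq_left (by linarith)
      rw [h1, h2]
      have h3 : z - x ≠ 0 := ne_of_gt (by linarith [hz.1])
      field_simp
      ring
    · rw [indicator_of_notMem (by simpa using hy)]
      push_neg at hy
      refine Tendsto.congr' ?_ tendsto_const_nhds
      filter_upwards [self_mem_nhdsWithin] with z hz
      have h1 : max (y - z) 0 = 0 := max_eq_right (by simp only [mem_Ioi] at hz; linarith)
      have h2 : max (y - x) 0 = 0 := max_eq_right (by linarith)
      rw [h1, h2]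
      simp

lemma Kfun_hasDeriv_left (μ : Measure ℝ) [IsProbabilityMeasure μ]
    (hint : Integrable (fun y : ℝ => y) μ) (x : ℝ) :
    HasDerivWithinAt (Kfun μ) (-(μ (Ici x)).toReal) (Iic x) x := by
  rw [hasDerivWithinAt_iff_tendsto_slope, Iic_diff_right]
  refine slope_tendsto_aux μ hint x _ _ measurableSet_Ici ?_ ?_
  · filter_upwards [self_mem_nhdsWithin] with z hz using ne_of_lt hz
  · intro y
    by_cases hy : x ≤ y
    · rw [indicator_of_mem (mem_Ici.mpr hy)]
      refine Tendsto.congr' ?_ tendsto_const_nhds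
      filter_upwards [self_mem_nhdsWithin] with z hz
      simp only [mem_Iio] at hz
      have h1 : max (y - z) 0 = y - z := max_eq_left (by linarith)
      have h2 : max (y - x) 0 = y - x := max_eq_left (by linarith)
      rw [h1, h2]
      have h3 : z - x ≠ 0 := ne_of_lt (by linarith)
      field_simp
      ring
    · rw [indicator_of_notMem (by simpa using hy)]
      push_neg at hy
      refine Tendsto.congr' ?_ tendsto_const_nhds
      filter_upwards [Ioo_mem_nhdsLT_of_mem (show x ∈ Ioc y x by exact ⟨hy, le_rfl⟩)] with z hz
      have h1 : max (y - z) 0 = 0 := max_eq_right (by linarith [hz.1])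
      have h2 : max (y - x) 0 = 0 := max_eq_right (by linarith)
      rw [h1, h2]
      simp

lemma intmax' (μ : Measure ℝ) [IsFiniteMeasure μ] (hint : Integrable (fun y : ℝ => y) μ)
    (x : ℝ) : Integrable (fun y : ℝ => max (x - y) 0) μ :=
  ((integrable_const x).sub hint).pos_part

lemma Kfun_add (μ : Measure ℝ) [IsProbabilityMeasure μ]
    (hint : Integrable (fun y : ℝ => y) μ) (x : ℝ) :
    Kfun μ x + x = ∫ y, max (x - y) 0 ∂μ := by
  have hsplit : ∀ y : ℝ, max (y - x) 0 = (y - x) + max (x - y) 0 := by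
    intro y
    rcases le_total x y with h | h
    · rw [max_eq_left (by linarith), max_eq_right (by linarith)]; ring
    · rw [max_eq_right (by linarith), max_eq_left (by linarith)]; ring
  have hf : Integrable (fun y : ℝ => y - x) μ := hint.sub (integrable_const x)
  have h1 : (∫ y, max (y - x) 0 ∂μ) = (∫ y, (y - x) ∂μ) + ∫ y, max (x - y) 0 ∂μ := by
    rw [← integral_add hf (intmax' μ hint x)]
    exact integral_congr_ae (Eventually.of_forall hsplit)
  have h2 : (∫ y, (y - x) ∂μ) = meanM μ - x := by
    rw [integral_sub hint (integrable_const x), integral_const]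
    simp [meanM]
  rw [Kfun_eq, h1, h2]; ring

lemma Kfun_atBot (μ : Measure ℝ) [IsProbabilityMeasure μ]
    (hint : Integrable (fun y : ℝ => y) μ) :
    Tendsto (fun x => Kfun μ x + x) atBot (𝓝 0) := by
  have key : Tendsto (fun x => ∫ y, max (x - y) 0 ∂μ) atBot (𝓝 (∫ _y, (0:ℝ) ∂μ)) := by
    refine tendsto_integral_filter_of_dominated_convergence (fun y => |y|) ?_ ?_ hint.abs ?_
    · exact Eventually.of_forall fun x =>
        ((continuous_const.sub continuous_id).max continuous_const).aestronglyMeasurable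
    · filter_upwards [eventually_le_atBot (0:ℝ)] with x hx
      refine Eventually.of_forall fun y => ?_
      rw [Real.norm_eq_abs, abs_of_nonneg (le_max_right _ _)]
      rcases le_total x y with h | h
      · rw [max_eq_right (by linarith)]; positivity
      · rw [max_eq_left (by linarith)]
        have : (0:ℝ) ≤ -y := by linarith
        calc x - y ≤ 0 - y := by linarith
          _ ≤ |y| := by rw [zero_sub]; exact neg_le_abs y
    · refine Eventually.of_forall fun y => ?_
      refine Tendsto.congr' ?_ tendsto_const_nhds
      filter_upwards [eventually_le_atBot y] with x hx
      rw [max_eq_right (by linarith)]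
  simp only [integral_zero] at key
  exact key.congr fun x => (Kfun_add μ hint x).symm

lemma Kfun_atTop (μ : Measure ℝ) [IsProbabilityMeasure μ]
    (hint : Integrable (fun y : ℝ => y) μ) :
    Tendsto (Kfun μ) atTop (𝓝 (-meanM μ)) := by
  have key : Tendsto (fun x => ∫ y, max (y - x) 0 ∂μ) atTop (𝓝 (∫ _y, (0:ℝ) ∂μ)) := by
    refine tendsto_integral_filter_of_dominated_convergence (fun y => |y|) ?_ ?_ hint.abs ?_
    · exact Eventually.of_forall fun x =>
        ((continuous_id.sub continuous_const).max continuous_const).aestronglyMeasurable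
    · filter_upwards [eventually_ge_atTop (0:ℝ)] with x hx
      refine Eventually.of_forall fun y => ?_
      rw [Real.norm_eq_abs, abs_of_nonneg (le_max_right _ _)]
      rcases le_total y x with h | h
      · rw [max_eq_right (by linarith)]; positivity
      · rw [max_eq_left (by linarith)]
        calc y - x ≤ y - 0 := by linarith
          _ ≤ |y| := by rw [sub_zero]; exact le_abs_self y
    · refine Eventually.of_forall fun y => ?_
      refine Tendsto.congr' ?_ tendsto_const_nhds
      filter_upwards [eventually_ge_atTop y] with x hx
      rw [max_eq_right (by linarith)]
  simp only [integral_zero] at key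
  have : Tendsto (fun x => (∫ y, max (y - x) 0 ∂μ) - meanM μ) atTop (𝓝 (0 - meanM μ)) :=
    key.sub_const _
  simpa using this.congr fun x => (Kfun_eq μ x).symm

lemma rSupE_le_iff (μ : Measure ℝ) (x : ℝ) : rSupE μ ≤ (x : EReal) ↔ μ (Ioi x) = 0 := by
  constructor
  · intro h
    have key : ∀ n : ℕ, μ (Ici (x + (n + 1 : ℝ)⁻¹)) = 0 := by
      intro n
      have hlt : rSupE μ < ((x + (n + 1 : ℝ)⁻¹ : ℝ) : EReal) := by
        refine lt_of_le_of_lt h ?_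
        rw [EReal.coe_lt_coe_iff]
        have : (0:ℝ) < (n + 1 : ℝ)⁻¹ := by positivity
        linarith
      rw [rSupE, sInf_lt_iff] at hlt
      obtain ⟨a, ha, hlt'⟩ := hlt
      obtain ⟨w, hw, rfl⟩ := ha
      rw [EReal.coe_lt_coe_iff] at hlt'
      exact measure_mono_null (Ici_subset_Ici.2 hlt'.le) hw
    have hsub : Ioi x ⊆ ⋃ n : ℕ, Ici (x + (n + 1 : ℝ)⁻¹) := by
      intro y hy
      simp only [mem_Ioi] at hy
      obtain ⟨n, hn⟩ := exists_nat_one_div_lt (show (0:ℝ) < y - x by linarith)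
      refine mem_iUnion.2 ⟨n, ?_⟩
      rw [one_div] at hn
      simp only [mem_Ici]
      linarith
    exact measure_mono_null hsub (measure_iUnion_null key)
  · intro h
    refine le_of_forall_gt_imp_ge_of_dense fun c hc => ?_
    induction c using EReal.rec with
    | bot => exact absurd hc (by simp)
    | top => exact le_top
    | coe z =>
      rw [EReal.coe_lt_coe_iff] at hc
      refine sInf_le ⟨z, ?_, rfl⟩
      exact measure_mono_null (fun y hy => lt_of_lt_of_le hc hy) h

lemma lt_rSupE_iff (μ : Measure ℝ) (x : ℝ) : (x : EReal) < rSupE μ ↔ μ (Ioi x) ≠ 0 := by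
  rw [← not_le, not_iff_not, rSupE_le_iff]

lemma psiWds_eq (μ : Measure ℝ) (x : ℝ) (h : μ (Ioi x) ≠ 0) :
    psiWds μ x = ((((∫ y in Ici x, y ∂μ) - meanM μ) / (μ (Ici x)).toReal : ℝ) : EReal) :=
  if_pos ((lt_rSupE_iff μ x).2 h)

lemma psiWds_eq_top (μ : Measure ℝ) (x : ℝ) (h : μ (Ioi x) = 0) : psiWds μ x = ⊤ :=
  if_neg (by rw [lt_rSupE_iff]; exact not_not.2 h)

lemma Kfun_eq' (μ : Measure ℝ) [IsProbabilityMeasure μ]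
    (hint : Integrable (fun y : ℝ => y) μ) (x : ℝ) :
    Kfun μ x = (∫ y in Ici x, y ∂μ) - x * (μ (Ici x)).toReal - meanM μ := by
  unfold Kfun
  have hf : Integrable (fun y : ℝ => y) (μ.restrict (Ici x)) := hint.restrict
  have : (∫ y in Ici x, (y - x) ∂μ) = (∫ y in Ici x, y ∂μ) - ∫ _y in Ici x, x ∂μ :=
    integral_sub hf (integrable_const x)
  rw [this, setIntegral_const]
  simp [mul_comm]
  left; rfl

lemma mono_of_right_deriv {g g' : ℝ → ℝ} {a b : ℝ} (hab : a ≤ b)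
    (hcont : ContinuousOn g (Icc a b))
    (hd : ∀ x ∈ Ico a b, HasDerivWithinAt g (g' x) (Ici x) x)
    (hpos : ∀ x ∈ Ico a b, 0 ≤ g' x) : g a ≤ g b := by
  have key := image_le_of_deriv_right_le_deriv_boundary
    (f := fun x => 2 * g a - g x) (f' := fun x => 0 - g' x) (a := a) (b := b)
    (continuousOn_const.sub hcont)
    (fun x hx => (hasDerivWithinAt_const x _ (2 * g a)).sub (hd x hx))
    (B := fun _ => g a) (B' := fun _ => 0) (by show 2 * g a - g a ≤ g a; linarith)
    continuousOn_const
    (fun x _ => hasDerivWithinAt_const x _ (g a))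
    (fun x hx => by simpa using hpos x hx)
  have h2 : 2 * g a - g b ≤ g a := key (right_mem_Icc.2 hab)
  linarith

lemma mono_of_left_deriv {g g' : ℝ → ℝ} {a b : ℝ} (hab : a ≤ b)
    (hcont : ContinuousOn g (Icc a b))
    (hd : ∀ x ∈ Ioc a b, HasDerivWithinAt g (g' x) (Iic x) x)
    (hpos : ∀ x ∈ Ioc a b, 0 ≤ g' x) : g a ≤ g b := by
  have hneg : Continuous fun u : ℝ => -u := continuous_neg
  have hmaps : MapsTo (fun u : ℝ => -u) (Icc (-b) (-a)) (Icc a b) := by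
    intro u hu
    simp only [mem_Icc] at hu ⊢
    constructor <;> linarith [hu.1, hu.2]
  have hGc : ContinuousOn (fun u => -g (-u)) (Icc (-b) (-a)) :=
    (hcont.comp hneg.continuousOn hmaps).neg
  have hGd : ∀ u ∈ Ico (-b) (-a), HasDerivWithinAt (fun u => -g (-u)) (g' (-u)) (Ici u) u := by
    intro u hu
    simp only [mem_Ico] at hu
    have hx : -u ∈ Ioc a b := by constructor <;> linarith [hu.1, hu.2]
    have hinner : HasDerivWithinAt (fun u : ℝ => -u) (-1) (Ici u) u :=
      (hasDerivAt_neg u).hasDerivWithinAt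
    have hmaps2 : MapsTo (fun u : ℝ => -u) (Ici u) (Iic (-u)) := fun v hv => by
      simp only [mem_Ici] at hv; simp only [mem_Iic]; linarith
    have hcomp := HasDerivWithinAt.comp u (hd (-u) hx) hinner hmaps2
    have := hcomp.neg
    exact this.congr_deriv (by ring)
  have := mono_of_right_deriv (g := fun u => -g (-u)) (g' := fun u => g' (-u))
    (a := -b) (b := -a) (by linarith) hGc hGd
    (fun u hu => hpos (-u) (by simp only [mem_Ico] at hu; constructor <;> linarith [hu.1, hu.2]))
  simpa using this


theorem stmt8 (μ : ℝ → Measure ℝ)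
    (hprob : ∀ t, 0 ≤ t → IsProbabilityMeasure (μ t))
    (hint : ∀ t, 0 ≤ t → Integrable (fun y : ℝ => y) (μ t))
    (hneg : ∀ t, 0 ≤ t → meanM (μ t) < 0)
    (hwds : ∀ s t, 0 ≤ s → s ≤ t → ∀ x : ℝ, psiWds (μ s) x ≤ psiWds (μ t) x)
    (hmean : ∀ s t, 0 ≤ s → 0 ≤ t → meanM (μ s) = meanM (μ t)) :
    ∀ s t, 0 ≤ s → 0 ≤ t → μ s = μ t := by
  have main : ∀ s t, 0 ≤ s → 0 ≤ t → s ≤ t → μ s = μ t := by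
    intro s t hs ht hst
    haveI := hprob s hs
    haveI := hprob t ht
    have hints := hint s hs
    have hintt := hint t ht
    set m : ℝ := meanM (μ s) with hm
    have hmt : meanM (μ t) = m := (hmean s t hs ht).symm
    have hm0 : m < 0 := hneg s hs
    have hKs_pos : ∀ x, 0 < Kfun (μ s) x := fun x =>
      lt_of_lt_of_le (by linarith) (Kfun_ge (μ s) x)
    have hKt_pos : ∀ x, 0 < Kfun (μ t) x := fun x => by
      have := Kfun_ge (μ t) x; rw [hmt] at this; linarith
    -- key ratio inequality
    have hratio : ∀ x : ℝ, μ t (Ioi x) ≠ 0 →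
        (μ t (Ici x)).toReal / Kfun (μ t) x ≤ (μ s (Ici x)).toReal / Kfun (μ s) x := by
      intro x hxt
      have hxs : μ s (Ioi x) ≠ 0 := by
        intro h
        have h1 := hwds s t hs hst x
        rw [psiWds_eq_top (μ s) x h, psiWds_eq (μ t) x hxt] at h1
        exact EReal.coe_ne_top _ (top_le_iff.1 h1)
      have h1 := hwds s t hs hst x
      rw [psiWds_eq (μ s) x hxs, psiWds_eq (μ t) x hxt, EReal.coe_le_coe_iff] at h1
      set Ps := (μ s (Ici x)).toReal with hPsdef
      set Pt := (μ t (Ici x)).toReal with hPtdef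
      have hPs : 0 < Ps := ENNReal.toReal_pos
        (fun h0 => hxs (measure_mono_null Ioi_subset_Ici_self h0)) (measure_ne_top _ _)
      have hPt : 0 < Pt := ENNReal.toReal_pos
        (fun h0 => hxt (measure_mono_null Ioi_subset_Ici_self h0)) (measure_ne_top _ _)
      have hKs' : Kfun (μ s) x = (∫ y in Ici x, y ∂(μ s)) - x * Ps - m :=
        Kfun_eq' (μ s) hints x
      have hKt' : Kfun (μ t) x = (∫ y in Ici x, y ∂(μ t)) - x * Pt - m := by
        rw [Kfun_eq' (μ t) hintt x, hmt]
      have h2 : Kfun (μ s) x / Ps ≤ Kfun (μ t) x / Pt := by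
        have e1 : Kfun (μ s) x / Ps = ((∫ y in Ici x, y ∂(μ s)) - m) / Ps - x := by
          rw [hKs']; field_simp; ring
        have e2 : Kfun (μ t) x / Pt = ((∫ y in Ici x, y ∂(μ t)) - m) / Pt - x := by
          rw [hKt']; field_simp; ring
        rw [e1, e2]
        rw [← hm, hmt] at h1
        linarith [h1]
      have hq : 0 < Kfun (μ s) x / Ps := div_pos (hKs_pos x) hPs
      have h3 := one_div_le_one_div_of_le hq h2
      rwa [one_div_div, one_div_div] at h3
    -- F and its properties
    set F : ℝ → ℝ := fun x => Real.log (Kfun (μ t) x) - Real.log (Kfun (μ s) x) with hF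
    have hFcont : Continuous F :=
      ((Kfun_cont (μ t) hintt).log fun x => (hKt_pos x).ne').sub
        ((Kfun_cont (μ s) hints).log fun x => (hKs_pos x).ne')
    have hFmono : ∀ a b : ℝ, a ≤ b → (∀ x ∈ Ioc a b, μ t (Ioi x) ≠ 0) → F a ≤ F b := by
      intro a b hab hreg
      refine mono_of_left_deriv (g' := fun x =>
        (Kfun (μ t) x)⁻¹ * (-(μ t (Ici x)).toReal) -
          (Kfun (μ s) x)⁻¹ * (-(μ s (Ici x)).toReal)) hab hFcont.continuousOn ?_ ?_
      · intro x hx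
        have hdt := (Real.hasDerivAt_log (hKt_pos x).ne').comp_hasDerivWithinAt x
          (Kfun_hasDeriv_left (μ t) hintt x)
        have hds := (Real.hasDerivAt_log (hKs_pos x).ne').comp_hasDerivWithinAt x
          (Kfun_hasDeriv_left (μ s) hints x)
        exact hdt.sub hds
      · intro x hx
        show 0 ≤ (Kfun (μ t) x)⁻¹ * (-(μ t (Ici x)).toReal) -
          (Kfun (μ s) x)⁻¹ * (-(μ s (Ici x)).toReal)
        have h1 := hratio x (hreg x hx)
        have hPsn : (0:ℝ) ≤ (μ s (Ici x)).toReal := ENNReal.toReal_nonneg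
        have e : (Kfun (μ t) x)⁻¹ * (-(μ t (Ici x)).toReal) -
            (Kfun (μ s) x)⁻¹ * (-(μ s (Ici x)).toReal) =
            (μ s (Ici x)).toReal / Kfun (μ s) x - (μ t (Ici x)).toReal / Kfun (μ t) x := by
          rw [div_eq_mul_inv, div_eq_mul_inv]; ring
        rw [e]
        linarith
    -- limit at -infty
    have hFbot : Tendsto F atBot (𝓝 0) := by
      have h1 := Kfun_atBot (μ t) hintt
      have h2 := Kfun_atBot (μ s) hints
      have hdiff : Tendsto (fun x => Kfun (μ t) x - Kfun (μ s) x) atBot (𝓝 0) := by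
        have h3 : Tendsto (fun x => (Kfun (μ t) x + x) - (Kfun (μ s) x + x)) atBot
            (𝓝 (0 - 0)) := h1.sub h2
        rw [sub_zero] at h3
        exact h3.congr fun x => by ring
      have hfrac : Tendsto (fun x => (Kfun (μ t) x - Kfun (μ s) x) / Kfun (μ s) x)
          atBot (𝓝 0) := by
        apply squeeze_zero_norm (a := fun x => |Kfun (μ t) x - Kfun (μ s) x| / (-m))
        · intro x
          rw [Real.norm_eq_abs, abs_div]
          have habs : |Kfun (μ s) x| = Kfun (μ s) x := abs_of_pos (hKs_pos x)
          rw [habs]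
          exact div_le_div_of_nonneg_left (abs_nonneg _) (by linarith) (Kfun_ge (μ s) x)
        · have h4 := hdiff.abs.div_const (-m)
          simpa using h4
      have hrat1 : Tendsto (fun x => Kfun (μ t) x / Kfun (μ s) x) atBot (𝓝 1) := by
        have h5 : Tendsto (fun x => 1 + (Kfun (μ t) x - Kfun (μ s) x) / Kfun (μ s) x)
            atBot (𝓝 (1 + 0)) := tendsto_const_nhds.add hfrac
        rw [add_zero] at h5
        refine h5.congr fun x => ?_
        have hne := (hKs_pos x).ne'
        field_simp
        ring
      have h6 : Tendsto (fun x => Real.log (Kfun (μ t) x / Kfun (μ s) x)) atBot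
          (𝓝 (Real.log 1)) := (Real.continuousAt_log one_ne_zero).tendsto.comp hrat1
      rw [Real.log_one] at h6
      refine h6.congr fun x => ?_
      rw [Real.log_div (hKt_pos x).ne' (hKs_pos x).ne']
    -- K functions agree
    have hKeq : ∀ x, Kfun (μ s) x = Kfun (μ t) x := by
      have hexp : ∀ x, F x = 0 → Kfun (μ s) x = Kfun (μ t) x := by
        intro x hx
        have hlog : Real.log (Kfun (μ t) x) = Real.log (Kfun (μ s) x) := by
          have : Real.log (Kfun (μ t) x) - Real.log (Kfun (μ s) x) = 0 := hx
          linarith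
        calc Kfun (μ s) x = Real.exp (Real.log (Kfun (μ s) x)) :=
              (Real.exp_log (hKs_pos x)).symm
          _ = Real.exp (Real.log (Kfun (μ t) x)) := by rw [hlog]
          _ = Kfun (μ t) x := Real.exp_log (hKt_pos x)
      by_cases hall : ∀ x : ℝ, μ t (Ioi x) ≠ 0
      · have hFtop : Tendsto F atTop (𝓝 0) := by
          have h1 := Kfun_atTop (μ t) hintt
          rw [hmt] at h1
          have h2 := Kfun_atTop (μ s) hints
          rw [← hm] at h2
          have h3 : Tendsto (fun x => Real.log (Kfun (μ t) x)) atTop (𝓝 (Real.log (-m))) :=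
            (Real.continuousAt_log (by linarith)).tendsto.comp h1
          have h4 : Tendsto (fun x => Real.log (Kfun (μ s) x)) atTop (𝓝 (Real.log (-m))) :=
            (Real.continuousAt_log (by linarith)).tendsto.comp h2
          have h5 := h3.sub h4
          rw [sub_self] at h5
          exact h5
        intro x
        refine hexp x ?_
        have hge : 0 ≤ F x := by
          refine le_of_tendsto hFbot ?_
          filter_upwards [eventually_le_atBot x] with y hy
          exact hFmono y x hy fun z _ => hall z
        have hle : F x ≤ 0 := by
          refine ge_of_tendsto hFtop ?_
          filter_upwards [eventually_ge_atTop x] with y hy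
          exact hFmono x y hy fun z _ => hall z
        linarith
      · push_neg at hall
        obtain ⟨x0, hx0⟩ := hall
        set S : Set ℝ := {z | μ t (Ioi z) = 0} with hS
        have hSne : S.Nonempty := ⟨x0, hx0⟩
        have hx1 : ∃ x1 : ℝ, μ t (Ioi x1) ≠ 0 := by
          by_contra hc
          push_neg at hc
          have huniv : (univ : Set ℝ) ⊆ ⋃ n : ℕ, Ioi (-(n : ℝ)) := by
            intro y _
            obtain ⟨n, hn⟩ := exists_nat_gt (-y)
            exact mem_iUnion.2 ⟨n, by simp only [mem_Ioi]; linarith⟩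
          have h0 := measure_mono_null huniv (measure_iUnion_null fun n => hc _)
          simp [measure_univ] at h0
        obtain ⟨x1, hx1⟩ := hx1
        have hbdd : BddBelow S := by
          refine ⟨x1, fun z hz => ?_⟩
          by_contra hzx
          push_neg at hzx
          exact hx1 (measure_mono_null (Ioi_subset_Ioi hzx.le) hz)
        set r := sInf S with hr
        have hlow : ∀ x : ℝ, x < r → μ t (Ioi x) ≠ 0 := by
          intro x hx hcon
          exact absurd (csInf_le hbdd hcon) (not_le.2 hx)
        have hIoir : μ t (Ioi r) = 0 := by
          have key : ∀ n : ℕ, μ t (Ioi (r + (n + 1 : ℝ)⁻¹)) = 0 := by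
            intro n
            have hlt : sInf S < r + (n + 1 : ℝ)⁻¹ := by
              have hpos : (0:ℝ) < (n + 1 : ℝ)⁻¹ := by positivity
              rw [← hr]; linarith
            obtain ⟨z, hzS, hz⟩ := (csInf_lt_iff hbdd hSne).1 hlt
            exact measure_mono_null (Ioi_subset_Ioi hz.le) hzS
          have hsub : Ioi r ⊆ ⋃ n : ℕ, Ioi (r + (n + 1 : ℝ)⁻¹) := by
            intro y hy
            simp only [mem_Ioi] at hy
            obtain ⟨n, hn⟩ := exists_nat_one_div_lt (show (0:ℝ) < y - r by linarith)
            rw [one_div] at hn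
            exact mem_iUnion.2 ⟨n, by simp only [mem_Ioi]; linarith⟩
          exact measure_mono_null hsub (measure_iUnion_null key)
        have hKtr : Kfun (μ t) r = -m := by
          rw [Kfun_eq, hmt]
          have hae : ∀ᵐ y ∂(μ t), max (y - r) 0 = 0 := by
            rw [ae_iff]
            refine measure_mono_null (fun y hy => ?_) hIoir
            simp only [mem_setOf_eq] at hy
            by_contra hyr
            simp only [mem_Ioi, not_lt] at hyr
            exact hy (max_eq_right (by linarith))
          have hz : (∫ y, max (y - r) 0 ∂(μ t)) = 0 := by
            rw [integral_congr_ae hae, integral_zero]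
          rw [hz]; ring
        have hFr : F r ≤ 0 := by
          have hKsr : -m ≤ Kfun (μ s) r := Kfun_ge (μ s) r
          have hlog := Real.log_le_log (by linarith : (0:ℝ) < -m) hKsr
          simp only [hF]
          rw [hKtr]
          linarith
        have hF0 : ∀ x, x < r → F x = 0 := by
          intro x hx
          have hge : 0 ≤ F x := by
            refine le_of_tendsto hFbot ?_
            filter_upwards [eventually_le_atBot x] with y hy
            exact hFmono y x hy fun z hz => hlow z (lt_of_le_of_lt hz.2 hx)
          have hle : F x ≤ F r := by
            have htend : Tendsto F (𝓝[<] r) (𝓝 (F r)) :=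
              (hFcont.tendsto r).mono_left nhdsWithin_le_nhds
            refine ge_of_tendsto htend ?_
            filter_upwards [Ioo_mem_nhdsLT_of_mem (show r ∈ Ioc x r from ⟨hx, le_rfl⟩)]
              with z hz
            exact hFmono x z hz.1.le fun w hw => hlow w (lt_of_le_of_lt hw.2 hz.2)
          linarith
        have hKlt : ∀ x, x < r → Kfun (μ s) x = Kfun (μ t) x := fun x hx =>
          hexp x (hF0 x hx)
        have hKr : Kfun (μ s) r = Kfun (μ t) r := by
          have h1 : Tendsto (Kfun (μ s)) (𝓝[<] r) (𝓝 (Kfun (μ s) r)) :=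
            ((Kfun_cont (μ s) hints).tendsto r).mono_left nhdsWithin_le_nhds
          have h2 : Tendsto (Kfun (μ t)) (𝓝[<] r) (𝓝 (Kfun (μ t) r)) :=
            ((Kfun_cont (μ t) hintt).tendsto r).mono_left nhdsWithin_le_nhds
          refine tendsto_nhds_unique (h1.congr' ?_) h2
          filter_upwards [self_mem_nhdsWithin] with z hz
          exact hKlt z hz
        intro x
        rcases lt_or_ge x r with h | h
        · exact hKlt x h
        · have hKtx : Kfun (μ t) x = -m := by
            have h1 : Kfun (μ t) x ≤ Kfun (μ t) r := Kfun_anti (μ t) hintt h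
            have h2 := Kfun_ge (μ t) x
            rw [hmt] at h2
            rw [hKtr] at h1
            linarith
          have hKsx : Kfun (μ s) x = -m := by
            have h1 : Kfun (μ s) x ≤ Kfun (μ s) r := Kfun_anti (μ s) hints h
            rw [hKr, hKtr] at h1
            have h2 := Kfun_ge (μ s) x
            linarith
          rw [hKsx, hKtx]
    -- conclude
    have hIoi : ∀ x : ℝ, μ s (Ioi x) = μ t (Ioi x) := by
      intro x
      have hu : UniqueDiffWithinAt ℝ (Ici x) x := uniqueDiffOn_Ici x x self_mem_Ici
      have h1 := (Kfun_hasDeriv_right (μ s) hints x).derivWithin hu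
      have h2 := (Kfun_hasDeriv_right (μ t) hintt x).derivWithin hu
      have hfun : Kfun (μ s) = Kfun (μ t) := funext hKeq
      rw [hfun] at h1
      have h4 : (μ s (Ioi x)).toReal = (μ t (Ioi x)).toReal := by
        have h3 : -(μ s (Ioi x)).toReal = -(μ t (Ioi x)).toReal := by rw [← h1, ← h2]
        linarith
      exact (ENNReal.toReal_eq_toReal_iff' (measure_ne_top _ _) (measure_ne_top _ _)).1 h4
    refine Measure.ext_of_Iic (μ s) (μ t) fun x => ?_
    have hc : ∀ u : ℝ, 0 ≤ u → ∀ _ : IsProbabilityMeasure (μ u),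
        μ u (Iic x) = 1 - μ u (Ioi x) := by
      intro u _ hpu
      rw [← compl_Ioi, measure_compl measurableSet_Ioi (measure_ne_top _ _), measure_univ]
    rw [hc s hs ‹_›, hc t ht ‹_›, hIoi x]
  intro s t hs ht
  rcases le_total s t with h | h
  · exact main s t hs ht h
  · exact (main t s ht hs h).symm
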